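/- Let Δ⁺ be the positive roots of a simple root system with simple roots α₁,…,αₙ, and let x_α := 1 + Σᵢ k^α_i(xᵢ − 1) with all x_α > 0. If Σ_{α∈Δ⁺}(1 − 1/x_α)·k^α_j = 0 for every j = 1,…,n, then x₁ = ⋯ = xₙ = 1 (and hence x_α = 1 for all α ∈ Δ⁺). -/

import Mathlib

/-- With `x_α = 1 + Σᵢ k^α_i (xᵢ - 1) > 0` for all positive roots, if
`Σ_{α∈Δ⁺} (1 - 1/x_α)·k^α_j = 0` for every `j`, then `x₁ = ⋯ = xₙ = 1` (hence
`x_α = 1` for all `α ∈ Δ⁺`). -/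
theorem stmt_16 {ι : Type*} (Δp : Finset ι) (n : ℕ) (k : ι → Fin n → ℕ)
    (e : Fin n → ι) (he : ∀ i, e i ∈ Δp) (heinj : Function.Injective e)
    (hke : ∀ i j, k (e i) j = if j = i then 1 else 0)
    (xs : Fin n → ℝ)
    (hpos : ∀ α ∈ Δp, 0 < 1 + ∑ i, (k α i : ℝ) * (xs i - 1))
    (hcyt : ∀ j, (∑ α ∈ Δp,
      (1 - (1 + ∑ i, (k α i : ℝ) * (xs i - 1))⁻¹) * (k α j : ℝ)) = 0) :
    (∀ i, xs i = 1) ∧ ∀ α ∈ Δp, 1 + ∑ i, (k α i : ℝ) * (xs i - 1) = 1 := by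
  set X : ι → ℝ := fun α => 1 + ∑ i, (k α i : ℝ) * (xs i - 1) with hX
  have key : ∑ α ∈ Δp, (1 - (X α)⁻¹) * (X α - 1) = 0 := by
    have h0 : ∑ j, (∑ α ∈ Δp, (1 - (X α)⁻¹) * (k α j : ℝ)) * (xs j - 1) = 0 := by
      simp only [show ∀ j, ∑ α ∈ Δp, (1 - (X α)⁻¹) * (k α j : ℝ) = 0 from hcyt, zero_mul,
        Finset.sum_const_zero]
    have h1 : ∑ j, ∑ α ∈ Δp, (1 - (X α)⁻¹) * (k α j : ℝ) * (xs j - 1) = 0 := by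
      rw [← h0]
      exact Finset.sum_congr rfl fun j _ => (Finset.sum_mul ..).symm
    rw [Finset.sum_comm] at h1
    rw [← h1]
    apply Finset.sum_congr rfl
    intro α _
    simp only [hX]
    rw [add_sub_cancel_left, Finset.mul_sum]
    exact Finset.sum_congr rfl fun j _ => (mul_assoc _ _ _).symm
  have hzero : ∀ α ∈ Δp, (1 - (X α)⁻¹) * (X α - 1) = 0 := by
    intro α hα
    have hnn : ∀ β ∈ Δp, 0 ≤ (1 - (X β)⁻¹) * (X β - 1) := by
      intro β hβ
      have hpb := hpos β hβ
      have : (1 - (X β)⁻¹) * (X β - 1) = (X β - 1)^2 / X β := by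
        have hXb : X β ≠ 0 := ne_of_gt hpb
        field_simp
      rw [this]
      positivity
    exact (Finset.sum_eq_zero_iff_of_nonneg hnn).mp key α hα
  have hXone : ∀ α ∈ Δp, X α = 1 := by
    intro α hα
    have hpa := hpos α hα
    have h := hzero α hα
    rcases mul_eq_zero.mp h with h | h
    · have : (X α)⁻¹ = 1 := by linarith
      have := inv_eq_one.mp this
      linarith
    · linarith
  have hxs : ∀ i, xs i = 1 := by
    intro i
    have := hXone (e i) (he i)
    simp only [hX, hke] at this
    have hsum : ∑ j, ((if j = i then (1:ℕ) else 0 : ℕ) : ℝ) * (xs j - 1) = xs i - 1 := by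
      rw [Finset.sum_eq_single i (fun b _ hb => by simp [hb]) (by simp)]
      simp
    rw [hsum] at this
    linarith
  exact ⟨hxs, hXone⟩
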